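/- arXiv:1308.4495 — 6 statements merged into one kernel-verified Lean document; each statement's English description precedes it below -/
import Mathlib

section
/- Let A be an unbounded distributive pre-bilattice and θ an equivalence relation on A. Then θ is a congruence of the lattice (A; ∨_t, ∧_t) if and only if θ is a congruence of the lattice (A; ∨_k, ∧_k). -/
/-- An unbounded distributive pre-bilattice: two lattice structures
`(∨_t, ∧_t)` and `(∨_k, ∧_k)` on the same carrier, with each of the four
operations distributing over each of the other three. -/
structure DPBU (A : Type*) where
  tsup : A → A → A
  tinf : A → A → A
  ksup : A → A → A
  kinf : A → A → A
  tsup_comm : ∀ a b, tsup a b = tsup b a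
  tinf_comm : ∀ a b, tinf a b = tinf b a
  tsup_assoc : ∀ a b c, tsup (tsup a b) c = tsup a (tsup b c)
  tinf_assoc : ∀ a b c, tinf (tinf a b) c = tinf a (tinf b c)
  tsup_absorb : ∀ a b, tsup a (tinf a b) = a
  tinf_absorb : ∀ a b, tinf a (tsup a b) = a
  ksup_comm : ∀ a b, ksup a b = ksup b a
  kinf_comm : ∀ a b, kinf a b = kinf b a
  ksup_assoc : ∀ a b c, ksup (ksup a b) c = ksup a (ksup b c)
  kinf_assoc : ∀ a b c, kinf (kinf a b) c = kinf a (kinf b c)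
  ksup_absorb : ∀ a b, ksup a (kinf a b) = a
  kinf_absorb : ∀ a b, kinf a (ksup a b) = a
  tsup_tinf : ∀ a b c, tsup a (tinf b c) = tinf (tsup a b) (tsup a c)
  tsup_ksup : ∀ a b c, tsup a (ksup b c) = ksup (tsup a b) (tsup a c)
  tsup_kinf : ∀ a b c, tsup a (kinf b c) = kinf (tsup a b) (tsup a c)
  tinf_tsup : ∀ a b c, tinf a (tsup b c) = tsup (tinf a b) (tinf a c)
  tinf_ksup : ∀ a b c, tinf a (ksup b c) = ksup (tinf a b) (tinf a c)
  tinf_kinf : ∀ a b c, tinf a (kinf b c) = kinf (tinf a b) (tinf a c)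
  ksup_tsup : ∀ a b c, ksup a (tsup b c) = tsup (ksup a b) (ksup a c)
  ksup_tinf : ∀ a b c, ksup a (tinf b c) = tinf (ksup a b) (ksup a c)
  ksup_kinf : ∀ a b c, ksup a (kinf b c) = kinf (ksup a b) (ksup a c)
  kinf_tsup : ∀ a b c, kinf a (tsup b c) = tsup (kinf a b) (kinf a c)
  kinf_tinf : ∀ a b c, kinf a (tinf b c) = tinf (kinf a b) (kinf a c)
  kinf_ksup : ∀ a b c, kinf a (ksup b c) = ksup (kinf a b) (kinf a c)

/-- The truth order `≤_t`. -/
def DPBU.tle {A : Type*} (B : DPBU A) (a b : A) : Prop := B.tsup a b = b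

/-- The knowledge order `≤_k`. -/
def DPBU.kle {A : Type*} (B : DPBU A) (a b : A) : Prop := B.ksup a b = b

/-- An equivalence relation is compatible with a pair of binary operations
(join and meet), i.e. is a lattice congruence. -/
def IsLatCong {A : Type*} (sup inf : A → A → A) (θ : A → A → Prop) : Prop :=
  (∀ a b c d, θ a b → θ c d → θ (sup a c) (sup b d)) ∧
  (∀ a b c d, θ a b → θ c d → θ (inf a c) (inf b d))

/-- Generic transfer lemma: if `θ` is a congruence of the lattice `(s, i)`
and `f` is a commutative, associative, idempotent operation such that `s`, `i`
distribute over `f` and `f` distributes over `s`, `i`, then `θ` is compatible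
with `f`. -/
lemma cong_transfer {A : Type*} (θ : A → A → Prop) (hEq : Equivalence θ)
    (s i f : A → A → A)
    (s_comm : ∀ a b, s a b = s b a)
    (i_comm : ∀ a b, i a b = i b a)
    (s_absorb : ∀ a b, s a (i a b) = a)
    (i_absorb : ∀ a b, i a (s a b) = a)
    (s_i : ∀ a b c, s a (i b c) = i (s a b) (s a c))
    (f_comm : ∀ a b, f a b = f b a)
    (f_assoc : ∀ a b c, f (f a b) c = f a (f b c))
    (f_idem : ∀ a, f a a = a)
    (s_f : ∀ a b c, s a (f b c) = f (s a b) (s a c))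
    (i_f : ∀ a b c, i a (f b c) = f (i a b) (i a c))
    (f_s : ∀ a b c, f a (s b c) = s (f a b) (f a c))
    (f_i : ∀ a b c, f a (i b c) = i (f a b) (f a c))
    (h : IsLatCong s i θ) :
    ∀ a b c d, θ a b → θ c d → θ (f a c) (f b d) := by
  -- basic lattice facts
  have s_idem : ∀ a, s a a = a := by
    intro a
    have h2 := s_absorb a (s a a)
    rwa [i_absorb] at h2
  have i_idem : ∀ a, i a a = a := by
    intro a
    have h2 := i_absorb a (i a a)
    rwa [s_absorb] at h2
  have ile : ∀ a b, s a b = b → i a b = a := by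
    intro a b hab
    rw [← hab]
    exact i_absorb a b
  -- helper absorption facts
  have Lfa : ∀ a c, f (f a c) a = f a c := by
    intro a c
    rw [f_assoc, f_comm c a, ← f_assoc, f_idem]
  have Lfc : ∀ a c, f (f a c) c = f a c := by
    intro a c
    rw [f_assoc, f_idem]
  have L1 : ∀ a c, s (f a c) a = f a (s a c) := by
    intro a c
    rw [s_comm, s_f, s_idem]
  have L2 : ∀ a c, s (f a c) (i a c) = f a c := by
    intro a c
    rw [s_comm, s_f, s_comm (i a c) a, s_absorb, s_comm (i a c) c, i_comm a c,
      s_absorb]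
  have L3 : ∀ a c, f (f a c) (s a c) = f a c := by
    intro a c
    rw [f_s, Lfa, Lfc, s_idem]
  -- the two key identities, for a ≤ₜ b
  have I1 : ∀ a b c, s a b = b → s (f a c) (i a (f b c)) = f a c := by
    intro a b c hab
    have hia : i a b = a := ile a b hab
    calc s (f a c) (i a (f b c))
        = s (f a c) (f (i a b) (i a c)) := by rw [i_f]
      _ = s (f a c) (f a (i a c)) := by rw [hia]
      _ = f (s (f a c) a) (s (f a c) (i a c)) := s_f _ _ _
      _ = f (f a (s a c)) (f a c) := by rw [L1, L2]
      _ = f (s a c) (f a (f a c)) := by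
            rw [f_comm a (s a c), f_assoc]
      _ = f (s a c) (f a c) := by rw [← f_assoc a a c, f_idem]
      _ = f (f a c) (s a c) := f_comm _ _
      _ = f a c := L3 a c
  have I2 : ∀ a b c, s a b = b → s (f a c) (i b (f b c)) = f b c := by
    intro a b c hab
    have hVq : f (f b c) (i b (s a c)) = f b c := by
      rw [f_i, Lfa, f_s, Lfc, s_comm]
      exact i_absorb _ _
    calc s (f a c) (i b (f b c))
        = s (f a c) (f (i b b) (i b c)) := by rw [i_f]
      _ = s (f a c) (f b (i b c)) := by rw [i_idem]
      _ = f (s (f a c) b) (s (f a c) (i b c)) := s_f _ _ _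
      _ = f (s b (f a c)) (s (i b c) (f a c)) := by rw [s_comm (f a c) b,
            s_comm (f a c) (i b c)]
      _ = f (f (s b a) (s b c)) (f (s (i b c) a) (s (i b c) c)) := by
            rw [s_f, s_f]
      _ = f (f b (s b c)) (f (s a (i b c)) c) := by
            rw [s_comm b a, hab, s_comm (i b c) a, s_comm (i b c) c,
              i_comm b c, s_absorb]
      _ = f (f b (s b c)) (f (i b (s a c)) c) := by
            rw [s_i, hab]
      _ = f (s b c) (f b (f (i b (s a c)) c)) := by
            rw [f_comm b (s b c), f_assoc]
      _ = f (s b c) (f b (f c (i b (s a c)))) := by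
            rw [f_comm (i b (s a c)) c]
      _ = f (s b c) (f (f b c) (i b (s a c))) := by
            rw [← f_assoc b c (i b (s a c))]
      _ = f (s b c) (f b c) := by rw [hVq]
      _ = f (f b c) (s b c) := f_comm _ _
      _ = f b c := L3 b c
  -- one-sided compatibility, ordered case
  have stepOrdered : ∀ a b c, θ a b → s a b = b → θ (f a c) (f b c) := by
    intro a b c hθ hab
    have h1 : θ (i a (f b c)) (i b (f b c)) := h.2 _ _ _ _ hθ (hEq.refl _)
    have h2 := h.1 _ _ _ _ (hEq.refl (f a c)) h1
    rwa [I1 a b c hab, I2 a b c hab] at h2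
  -- one-sided compatibility, general case
  have stepGen : ∀ a b c, θ a b → θ (f a c) (f b c) := by
    intro a b c hθ
    have hma : θ (i a b) a := by
      have := h.2 a a a b (hEq.refl a) hθ
      rw [i_idem] at this
      exact hEq.symm this
    have hsma : s (i a b) a = a := by rw [s_comm]; exact s_absorb a b
    have h1 := stepOrdered (i a b) a c hma hsma
    have hmb : θ (i a b) b := by
      have := h.2 a b b b hθ (hEq.refl b)
      rwa [i_idem] at this
    have hsmb : s (i a b) b = b := by
      rw [s_comm, i_comm]; exact s_absorb b a
    have h2 := stepOrdered (i a b) b c hmb hsmb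
    exact hEq.trans (hEq.symm h1) h2
  intro a b c d hab hcd
  have h1 := stepGen a b c hab
  have h2 := stepGen c d b hcd
  rw [f_comm c b, f_comm d b] at h2
  exact hEq.trans h1 h2

/-- Proposition 2.2: an equivalence relation on an unbounded distributive
pre-bilattice is a congruence of the t-lattice iff it is a congruence of
the k-lattice. -/
theorem stmt_2 {A : Type*} (B : DPBU A) (θ : A → A → Prop)
    (hEq : Equivalence θ) :
    IsLatCong B.tsup B.tinf θ ↔ IsLatCong B.ksup B.kinf θ := by
  have ks_idem : ∀ a, B.ksup a a = a := by
    intro a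
    have h2 := B.ksup_absorb a (B.ksup a a)
    rwa [B.kinf_absorb] at h2
  have ki_idem : ∀ a, B.kinf a a = a := by
    intro a
    have h2 := B.kinf_absorb a (B.kinf a a)
    rwa [B.ksup_absorb] at h2
  have ts_idem : ∀ a, B.tsup a a = a := by
    intro a
    have h2 := B.tsup_absorb a (B.tsup a a)
    rwa [B.tinf_absorb] at h2
  have ti_idem : ∀ a, B.tinf a a = a := by
    intro a
    have h2 := B.tinf_absorb a (B.tinf a a)
    rwa [B.tsup_absorb] at h2
  constructor
  · intro h
    exact ⟨cong_transfer θ hEq B.tsup B.tinf B.ksup B.tsup_comm B.tinf_comm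
        B.tsup_absorb B.tinf_absorb B.tsup_tinf B.ksup_comm B.ksup_assoc
        ks_idem B.tsup_ksup B.tinf_ksup B.ksup_tsup B.ksup_tinf h,
      cong_transfer θ hEq B.tsup B.tinf B.kinf B.tsup_comm B.tinf_comm
        B.tsup_absorb B.tinf_absorb B.tsup_tinf B.kinf_comm B.kinf_assoc
        ki_idem B.tsup_kinf B.tinf_kinf B.kinf_tsup B.kinf_tinf h⟩
  · intro h
    exact ⟨cong_transfer θ hEq B.ksup B.kinf B.tsup B.ksup_comm B.kinf_comm
        B.ksup_absorb B.kinf_absorb B.ksup_kinf B.tsup_comm B.tsup_assoc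
        ts_idem B.ksup_tsup B.kinf_tsup B.tsup_ksup B.tsup_kinf h,
      cong_transfer θ hEq B.ksup B.kinf B.tinf B.ksup_comm B.kinf_comm
        B.ksup_absorb B.kinf_absorb B.ksup_kinf B.tinf_comm B.tinf_assoc
        ti_idem B.ksup_tinf B.kinf_tinf B.tinf_ksup B.tinf_kinf h⟩
end

section
/- Let A be an unbounded distributive pre-bilattice and let F be a filter of the t-lattice (A; ∨_t, ∧_t). Then F is a convex sublattice of the k-lattice (A; ∨_k, ∧_k), i.e., F is closed under ∨_k and ∧_k and is order-convex for ≤_k. -/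
lemma DPBU.tsup_idem {A : Type*} (B : DPBU A) (a : A) : B.tsup a a = a := by
  have h := B.tsup_absorb a (B.tsup a a)
  rwa [B.tinf_absorb] at h

lemma DPBU.tinf_idem {A : Type*} (B : DPBU A) (a : A) : B.tinf a a = a := by
  have h := B.tinf_absorb a (B.tinf a a)
  rwa [B.tsup_absorb] at h

/-- A filter of the t-lattice of an unbounded distributive pre-bilattice is a
convex sublattice of the k-lattice. -/
theorem stmt_4 {A : Type*} (B : DPBU A) (F : Set A)
    (hne : F.Nonempty)
    (hup : ∀ a b, a ∈ F → B.tle a b → b ∈ F)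
    (hinf : ∀ a b, a ∈ F → b ∈ F → B.tinf a b ∈ F) :
    (∀ a b, a ∈ F → b ∈ F → B.ksup a b ∈ F) ∧
    (∀ a b, a ∈ F → b ∈ F → B.kinf a b ∈ F) ∧
    (∀ a b c, a ∈ F → c ∈ F → B.kle a b → B.kle b c → b ∈ F) := by
  refine ⟨?_, ?_, ?_⟩
  · intro a b ha hb
    refine hup (B.tinf a b) _ (hinf a b ha hb) ?_
    show B.tsup (B.tinf a b) (B.ksup a b) = B.ksup a b
    rw [B.tsup_ksup, B.tsup_comm _ a, B.tsup_absorb,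
        B.tsup_comm _ b, B.tinf_comm a b, B.tsup_absorb]
  · intro a b ha hb
    refine hup (B.tinf a b) _ (hinf a b ha hb) ?_
    show B.tsup (B.tinf a b) (B.kinf a b) = B.kinf a b
    rw [B.tsup_kinf, B.tsup_comm _ a, B.tsup_absorb,
        B.tsup_comm _ b, B.tinf_comm a b, B.tsup_absorb]
  · intro a b c ha hc hab hbc
    have hab : B.ksup a b = b := hab
    have hbc : B.ksup b c = c := hbc
    -- kinf a b = a
    have hab' : B.kinf a b = a := by
      have h := B.kinf_absorb a b; rwa [hab] at h
    set x := B.tsup b a with hxdef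
    set y := B.tsup b c with hydef
    have hx : x ∈ F := by
      refine hup a x ha ?_
      show B.tsup a x = x
      rw [hxdef, B.tsup_comm b a, ← B.tsup_assoc, B.tsup_idem, B.tsup_comm a b]
    have hy : y ∈ F := by
      refine hup c y hc ?_
      show B.tsup c y = y
      rw [hydef, B.tsup_comm b c, ← B.tsup_assoc, B.tsup_idem, B.tsup_comm c b]
    -- b ≤_t x, b ≤_t y
    have hxb : B.tinf x b = b := by
      rw [B.tinf_comm, hxdef, B.tinf_absorb]
    have hby : B.tinf b y = b := by
      rw [hydef, B.tinf_absorb]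
    -- x ≤_k b : kinf x b = x
    have hxkb : B.kinf x b = x := by
      have h : B.tsup b (B.kinf a b) = B.kinf (B.tsup b a) (B.tsup b b) := B.tsup_kinf b a b
      rw [hab', B.tsup_idem] at h
      rw [← hxdef] at h
      exact h.symm
    -- b ≤_k y : ksup b y = y
    have hbky : B.ksup b y = y := by
      have h : B.tsup b (B.ksup b c) = B.ksup (B.tsup b b) (B.tsup b c) := B.tsup_ksup b b c
      rw [hbc, B.tsup_idem] at h
      rw [← hydef] at h
      exact h.symm
    -- main computation : tinf x y = b
    have key : B.tinf x y = b := by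
      have e1 : B.tinf x y = B.ksup (B.tinf x b) (B.tinf x y) := by
        conv_lhs => rw [← hbky, B.tinf_ksup]
      have e2 : B.tinf x y = B.kinf b (B.tinf x y) := by
        conv_lhs => rw [← hxkb, B.tinf_comm, B.tinf_kinf, B.tinf_comm y x,
          B.tinf_comm y b, hby, B.kinf_comm]
      rw [hxb] at e1
      conv_rhs at e1 => rw [e2]
      rwa [B.ksup_absorb] at e1
    rw [← key]
    exact hinf x y hx hy
end

section
/- Let A be an unbounded distributive pre-bilattice and let h : A → {0,1} be a map which is a lattice homomorphism from (A; ∨_t, ∧_t) to the two-element lattice 2 with 0 < 1. Then h is a lattice homomorphism from (A; ∨_k, ∧_k) either to 2 or to its order dual 2^∂. -/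
namespace DPBUaux
variable {A : Type*} (B : DPBU A)

lemma tsup_idem (a : A) : B.tsup a a = a := by
  have := B.tsup_absorb a (B.tsup a a)
  rwa [B.tinf_absorb] at this

lemma tinf_idem (a : A) : B.tinf a a = a := by
  have := B.tinf_absorb a (B.tinf a a)
  rwa [B.tsup_absorb] at this

lemma E1 (a b : A) : B.tinf (B.tsup a b) (B.ksup a b) = B.ksup a b := by
  rw [B.tinf_ksup, B.tinf_comm (B.tsup a b) a, B.tinf_absorb,
    B.tinf_comm (B.tsup a b) b, B.tsup_comm a b, B.tinf_absorb]

lemma E2 (a b : A) : B.tsup (B.tinf a b) (B.ksup a b) = B.ksup a b := by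
  rw [B.tsup_ksup, B.tsup_comm (B.tinf a b) a, B.tsup_absorb,
    B.tsup_comm (B.tinf a b) b, B.tinf_comm a b, B.tsup_absorb]

lemma E1' (a b : A) : B.tinf (B.tsup a b) (B.kinf a b) = B.kinf a b := by
  rw [B.tinf_kinf, B.tinf_comm (B.tsup a b) a, B.tinf_absorb,
    B.tinf_comm (B.tsup a b) b, B.tsup_comm a b, B.tinf_absorb]

lemma E2' (a b : A) : B.tsup (B.tinf a b) (B.kinf a b) = B.kinf a b := by
  rw [B.tsup_kinf, B.tsup_comm (B.tinf a b) a, B.tsup_absorb,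
    B.tsup_comm (B.tinf a b) b, B.tinf_comm a b, B.tsup_absorb]

lemma E3 (a b : A) : B.tsup (B.ksup a b) (B.kinf a b) = B.tsup a b := by
  rw [B.tsup_kinf, B.tsup_comm (B.ksup a b) a, B.tsup_ksup, tsup_idem,
    B.tsup_comm (B.ksup a b) b, B.tsup_ksup, tsup_idem, B.tsup_comm b a,
    B.ksup_comm a (B.tsup a b), ← B.ksup_kinf,
    B.ksup_comm (B.tsup a b) (B.kinf a b), B.ksup_tsup,
    B.ksup_comm (B.kinf a b) a, B.ksup_absorb,
    B.ksup_comm (B.kinf a b) b, B.kinf_comm a b, B.ksup_absorb]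

lemma E4 (a b : A) : B.tinf (B.ksup a b) (B.kinf a b) = B.tinf a b := by
  rw [B.tinf_kinf, B.tinf_comm (B.ksup a b) a, B.tinf_ksup, tinf_idem,
    B.tinf_comm (B.ksup a b) b, B.tinf_ksup, tinf_idem, B.tinf_comm b a,
    B.ksup_comm a (B.tinf a b), ← B.ksup_kinf,
    B.ksup_comm (B.tinf a b) (B.kinf a b), B.ksup_tinf,
    B.ksup_comm (B.kinf a b) a, B.ksup_absorb,
    B.ksup_comm (B.kinf a b) b, B.kinf_comm a b, B.ksup_absorb]

lemma D1 (a a' b : A) :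
    B.ksup (B.tinf a a') b = B.tinf (B.ksup a b) (B.ksup a' b) := by
  rw [B.ksup_comm, B.ksup_tinf, B.ksup_comm b a, B.ksup_comm b a']

lemma D2 (a a' b : A) :
    B.ksup (B.tsup a a') b = B.tsup (B.ksup a b) (B.ksup a' b) := by
  rw [B.ksup_comm, B.ksup_tsup, B.ksup_comm b a, B.ksup_comm b a']

lemma D3 (a a' b : A) :
    B.kinf (B.tinf a a') b = B.tinf (B.kinf a b) (B.kinf a' b) := by
  rw [B.kinf_comm, B.kinf_tinf, B.kinf_comm b a, B.kinf_comm b a']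

variable (h : A → Bool)
    (hsup : ∀ a b, h (B.tsup a b) = (h a || h b))
    (hinf : ∀ a b, h (B.tinf a b) = (h a && h b))
include hsup hinf

-- sandwich facts
lemma sandS (a b : A) :
    (((h a || h b) && h (B.ksup a b)) = h (B.ksup a b)) ∧
    (((h a && h b) || h (B.ksup a b)) = h (B.ksup a b)) := by
  constructor
  · rw [← hsup, ← hinf, E1]
  · rw [← hinf, ← hsup, E2]

lemma sandI (a b : A) :
    (((h a || h b) && h (B.kinf a b)) = h (B.kinf a b)) ∧
    (((h a && h b) || h (B.kinf a b)) = h (B.kinf a b)) := by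
  constructor
  · rw [← hsup, ← hinf, E1']
  · rw [← hinf, ← hsup, E2']

lemma eqS (a b : A) (hab : h a = h b) : h (B.ksup a b) = h a := by
  obtain ⟨h1, h2⟩ := sandS B h hsup hinf a b
  rw [← hab] at h1 h2
  cases hha : h a <;> rw [hha] at h1 h2 <;> simp_all

lemma eqI (a b : A) (hab : h a = h b) : h (B.kinf a b) = h a := by
  obtain ⟨h1, h2⟩ := sandI B h hsup hinf a b
  rw [← hab] at h1 h2
  cases hha : h a <;> rw [hha] at h1 h2 <;> simp_all

omit hinf in
lemma orSI (a b : A) :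
    (h (B.ksup a b) || h (B.kinf a b)) = (h a || h b) := by
  have := hsup (B.ksup a b) (B.kinf a b)
  rw [E3, hsup] at this
  exact this.symm

omit hsup in
lemma andSI (a b : A) :
    (h (B.ksup a b) && h (B.kinf a b)) = (h a && h b) := by
  have := hinf (B.ksup a b) (B.kinf a b)
  rw [E4, hinf] at this
  exact this.symm

/-- complement: if `h a ≠ h b` then `h (kinf a b) = ! h (ksup a b)`. -/
lemma compl (a b : A) (hab : h a ≠ h b) :
    h (B.kinf a b) = ! h (B.ksup a b) := by
  have h1 := orSI B h hsup a b
  have h2 := andSI B h hinf a b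
  cases hha : h a <;> cases hhb : h b <;> rw [hha, hhb] at h1 h2 hab <;>
    simp at hab <;>
    cases hS : h (B.ksup a b) <;> cases hI : h (B.kinf a b) <;>
    rw [hS, hI] at h1 h2 <;> simp_all

/-- well-definedness in the first argument. -/
lemma wdf1 (a a' b : A) (haa : h a = h a') :
    h (B.ksup a b) = h (B.ksup a' b) := by
  by_cases hb : h b = h a
  · rw [eqS B h hsup hinf a b hb.symm, eqS B h hsup hinf a' b (haa ▸ hb.symm), haa]
  · have he : h (B.tinf a a') = h a := by rw [hinf, ← haa, Bool.and_self]
    have hSe : h (B.ksup (B.tinf a a') b) = (h (B.ksup a b) && h (B.ksup a' b)) := by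
      rw [D1, hinf]
    have hIe : h (B.kinf (B.tinf a a') b) = (h (B.kinf a b) && h (B.kinf a' b)) := by
      rw [D3, hinf]
    have ca : h (B.kinf a b) = ! h (B.ksup a b) :=
      compl B h hsup hinf a b (fun hh => hb hh.symm)
    have ca' : h (B.kinf a' b) = ! h (B.ksup a' b) :=
      compl B h hsup hinf a' b (fun hh => hb (haa ▸ hh.symm))
    have ce : h (B.kinf (B.tinf a a') b) = ! h (B.ksup (B.tinf a a') b) :=
      compl B h hsup hinf _ b (fun hh => hb (he ▸ hh.symm))
    rw [hSe, hIe, ca, ca'] at ce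
    cases hx : h (B.ksup a b) <;> cases hy : h (B.ksup a' b) <;>
      rw [hx, hy] at ce <;> simp_all

lemma wdf (a a' b b' : A) (haa : h a = h a') (hbb : h b = h b') :
    h (B.ksup a b) = h (B.ksup a' b') := by
  have step1 := wdf1 B h hsup hinf a a' b haa
  have step2 : h (B.ksup a' b) = h (B.ksup a' b') := by
    rw [B.ksup_comm a' b, B.ksup_comm a' b']
    exact wdf1 B h hsup hinf b b' a' hbb
  rw [step1, step2]

end DPBUaux

/-- If `h : A → 2` is a lattice homomorphism from the t-lattice to the
two-element lattice, then `h` is a lattice homomorphism from the k-lattice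
either to `2` or to its order dual `2^∂`. -/
theorem stmt_5 {A : Type*} (B : DPBU A) (h : A → Bool)
    (hsup : ∀ a b, h (B.tsup a b) = (h a || h b))
    (hinf : ∀ a b, h (B.tinf a b) = (h a && h b)) :
    (∀ a b, h (B.ksup a b) = (h a || h b) ∧ h (B.kinf a b) = (h a && h b)) ∨
    (∀ a b, h (B.ksup a b) = (h a && h b) ∧ h (B.kinf a b) = (h a || h b)) := by
  classical
  by_cases hc : ∀ x y : A, h x = h y
  · left
    intro a b
    refine ⟨?_, ?_⟩
    · rw [DPBUaux.eqS B h hsup hinf a b (hc a b), hc a b, Bool.or_self]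
    · rw [DPBUaux.eqI B h hsup hinf a b (hc a b), hc a b, Bool.and_self]
  · push_neg at hc
    obtain ⟨x, y, hxy⟩ := hc
    -- pick a0 with h a0 = true, b0 with h b0 = false
    obtain ⟨a0, b0, ha0, hb0⟩ : ∃ a0 b0 : A, h a0 = true ∧ h b0 = false := by
      cases hx : h x <;> cases hy : h y <;> rw [hx, hy] at hxy <;> simp at hxy
      · exact ⟨y, x, hy, hx⟩
      · exact ⟨x, y, hx, hy⟩
    have uniqS : ∀ a b : A, h a = true → h b = false →
        h (B.ksup a b) = h (B.ksup a0 b0) := by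
      intro a b ha hb
      exact DPBUaux.wdf B h hsup hinf a a0 b b0 (ha.trans ha0.symm) (hb.trans hb0.symm)
    have uniqI : ∀ a b : A, h a = true → h b = false →
        h (B.kinf a b) = ! h (B.ksup a0 b0) := by
      intro a b ha hb
      rw [DPBUaux.compl B h hsup hinf a b (by rw [ha, hb]; simp),
        uniqS a b ha hb]
    cases hs : h (B.ksup a0 b0)
    · right
      intro a b
      by_cases hab : h a = h b
      · rw [DPBUaux.eqS B h hsup hinf a b hab, DPBUaux.eqI B h hsup hinf a b hab,
          hab, Bool.and_self, Bool.or_self]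
        exact ⟨rfl, rfl⟩
      · cases hha : h a <;> cases hhb : h b <;> rw [hha, hhb] at hab <;>
          simp at hab
        · -- h a = false, h b = true : use commutativity
          rw [B.ksup_comm a b, B.kinf_comm a b]
          have h1 := uniqS b a hhb hha
          have h2 := uniqI b a hhb hha
          rw [hs] at h1 h2
          rw [h1, h2]
          exact ⟨rfl, rfl⟩
        · have h1 := uniqS a b hha hhb
          have h2 := uniqI a b hha hhb
          rw [hs] at h1 h2
          rw [h1, h2]
          exact ⟨rfl, rfl⟩
    · left
      intro a b
      by_cases hab : h a = h b
      · rw [DPBUaux.eqS B h hsup hinf a b hab, DPBUaux.eqI B h hsup hinf a b hab,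
          hab, Bool.and_self, Bool.or_self]
        exact ⟨rfl, rfl⟩
      · cases hha : h a <;> cases hhb : h b <;> rw [hha, hhb] at hab <;>
          simp at hab
        · rw [B.ksup_comm a b, B.kinf_comm a b]
          have h1 := uniqS b a hhb hha
          have h2 := uniqI b a hhb hha
          rw [hs] at h1 h2
          rw [h1, h2]
          exact ⟨rfl, rfl⟩
        · have h1 := uniqS a b hha hhb
          have h2 := uniqI a b hha hhb
          rw [hs] at h1 h2
          rw [h1, h2]
          exact ⟨rfl, rfl⟩
end

section
/- Every prime filter of the t-lattice of an unbounded distributive pre-bilattice A is either a prime filter or a prime ideal of the k-lattice of A. -/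
/-- `F` is a prime filter for the order/operations `le`, `sup`, `inf`. -/
def IsPrimeFilter {A : Type*} (le : A → A → Prop) (sup inf : A → A → A)
    (F : Set A) : Prop :=
  F.Nonempty ∧ F ≠ Set.univ ∧
  (∀ a b, a ∈ F → le a b → b ∈ F) ∧
  (∀ a b, a ∈ F → b ∈ F → inf a b ∈ F) ∧
  (∀ a b, sup a b ∈ F → a ∈ F ∨ b ∈ F)

/-- `F` is a prime ideal for the order/operations `le`, `sup`, `inf`. -/
def IsPrimeIdeal {A : Type*} (le : A → A → Prop) (sup inf : A → A → A)
    (F : Set A) : Prop :=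
  F.Nonempty ∧ F ≠ Set.univ ∧
  (∀ a b, a ∈ F → le b a → b ∈ F) ∧
  (∀ a b, a ∈ F → b ∈ F → sup a b ∈ F) ∧
  (∀ a b, inf a b ∈ F → a ∈ F ∨ b ∈ F)

namespace DPBU

variable {A : Type*} (B : DPBU A)

theorem tinf_idem_s6 (a : A) : B.tinf a a = a := by
  calc B.tinf a a = B.tinf a (B.tsup a (B.tinf a a)) := by rw [B.tsup_absorb]
    _ = a := B.tinf_absorb _ _

theorem tsup_idem_s6 (a : A) : B.tsup a a = a := by
  calc B.tsup a a = B.tsup a (B.tinf a a) := by rw [B.tinf_idem_s6]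
    _ = a := B.tsup_absorb _ _

theorem kinf_idem (a : A) : B.kinf a a = a := by
  calc B.kinf a a = B.kinf a (B.ksup a (B.kinf a a)) := by rw [B.ksup_absorb]
    _ = a := B.kinf_absorb _ _

theorem ksup_idem (a : A) : B.ksup a a = a := by
  calc B.ksup a a = B.ksup a (B.kinf a a) := by rw [B.kinf_idem]
    _ = a := B.ksup_absorb _ _

theorem tle_trans {a b c : A} (h1 : B.tle a b) (h2 : B.tle b c) : B.tle a c := by
  unfold tle at *
  calc B.tsup a c = B.tsup a (B.tsup b c) := by rw [h2]
    _ = B.tsup (B.tsup a b) c := (B.tsup_assoc _ _ _).symm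
    _ = B.tsup b c := by rw [h1]
    _ = c := h2

/-- `tinf a b ≤_t kinf a b` -/
theorem tle_tinf_kinf (a b : A) : B.tle (B.tinf a b) (B.kinf a b) := by
  unfold tle
  calc B.tsup (B.tinf a b) (B.kinf a b)
      = B.kinf (B.tsup (B.tinf a b) a) (B.tsup (B.tinf a b) b) := B.tsup_kinf _ _ _
    _ = B.kinf (B.tsup a (B.tinf a b)) (B.tsup b (B.tinf a b)) := by
        rw [B.tsup_comm (B.tinf a b) a, B.tsup_comm (B.tinf a b) b]
    _ = B.kinf (B.tsup a (B.tinf a b)) (B.tsup b (B.tinf b a)) := by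
        rw [B.tinf_comm a b]
    _ = B.kinf a b := by rw [B.tsup_absorb, B.tsup_absorb]

/-- `tinf a b ≤_t ksup a b` -/
theorem tle_tinf_ksup (a b : A) : B.tle (B.tinf a b) (B.ksup a b) := by
  unfold tle
  calc B.tsup (B.tinf a b) (B.ksup a b)
      = B.ksup (B.tsup (B.tinf a b) a) (B.tsup (B.tinf a b) b) := B.tsup_ksup _ _ _
    _ = B.ksup (B.tsup a (B.tinf a b)) (B.tsup b (B.tinf a b)) := by
        rw [B.tsup_comm (B.tinf a b) a, B.tsup_comm (B.tinf a b) b]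
    _ = B.ksup (B.tsup a (B.tinf a b)) (B.tsup b (B.tinf b a)) := by
        rw [B.tinf_comm a b]
    _ = B.ksup a b := by rw [B.tsup_absorb, B.tsup_absorb]

/-- `ksup a b ≤_t tsup a b` -/
theorem tle_ksup_tsup (a b : A) : B.tle (B.ksup a b) (B.tsup a b) := by
  unfold tle
  have h1 : B.tsup (B.tsup a b) a = B.tsup a b := by
    calc B.tsup (B.tsup a b) a = B.tsup a (B.tsup a b) := B.tsup_comm _ _
      _ = B.tsup (B.tsup a a) b := (B.tsup_assoc _ _ _).symm
      _ = B.tsup a b := by rw [B.tsup_idem_s6]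
  have h2 : B.tsup (B.tsup a b) b = B.tsup a b := by
    calc B.tsup (B.tsup a b) b = B.tsup a (B.tsup b b) := B.tsup_assoc _ _ _
      _ = B.tsup a b := by rw [B.tsup_idem_s6]
  calc B.tsup (B.ksup a b) (B.tsup a b)
      = B.tsup (B.tsup a b) (B.ksup a b) := B.tsup_comm _ _
    _ = B.ksup (B.tsup (B.tsup a b) a) (B.tsup (B.tsup a b) b) := B.tsup_ksup _ _ _
    _ = B.ksup (B.tsup a b) (B.tsup a b) := by rw [h1, h2]
    _ = B.tsup a b := B.ksup_idem _

/-- `kinf a b ≤_t tsup a b` -/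
theorem tle_kinf_tsup (a b : A) : B.tle (B.kinf a b) (B.tsup a b) := by
  unfold tle
  have h1 : B.tsup (B.tsup a b) a = B.tsup a b := by
    calc B.tsup (B.tsup a b) a = B.tsup a (B.tsup a b) := B.tsup_comm _ _
      _ = B.tsup (B.tsup a a) b := (B.tsup_assoc _ _ _).symm
      _ = B.tsup a b := by rw [B.tsup_idem_s6]
  have h2 : B.tsup (B.tsup a b) b = B.tsup a b := by
    calc B.tsup (B.tsup a b) b = B.tsup a (B.tsup b b) := B.tsup_assoc _ _ _
      _ = B.tsup a b := by rw [B.tsup_idem_s6]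
  calc B.tsup (B.kinf a b) (B.tsup a b)
      = B.tsup (B.tsup a b) (B.kinf a b) := B.tsup_comm _ _
    _ = B.kinf (B.tsup (B.tsup a b) a) (B.tsup (B.tsup a b) b) := B.tsup_kinf _ _ _
    _ = B.kinf (B.tsup a b) (B.tsup a b) := by rw [h1, h2]
    _ = B.tsup a b := B.kinf_idem _

/-- Key inequality: if `a ≤_k b` and `d ≤_k c` then `tinf a c ≤_t tsup b d`. -/
theorem key {a b c d : A} (hab : B.kinf a b = a) (hdc : B.ksup d c = c) :
    B.tsup (B.tinf a c) (B.tsup b d) = B.tsup b d := by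
  -- notation: u = tinf a c, Y = tsup b d, X = tsup u Y
  have s1 : B.tsup (B.tinf b c) (B.tsup b d) = B.tsup b d := by
    calc B.tsup (B.tinf b c) (B.tsup b d)
        = B.tsup (B.tsup (B.tinf b c) b) d := (B.tsup_assoc _ _ _).symm
      _ = B.tsup (B.tsup b (B.tinf b c)) d := by rw [B.tsup_comm (B.tinf b c) b]
      _ = B.tsup b d := by rw [B.tsup_absorb]
  have s2 : B.tsup (B.tinf a d) (B.tsup b d) = B.tsup b d := by
    calc B.tsup (B.tinf a d) (B.tsup b d)
        = B.tsup (B.tinf a d) (B.tsup d b) := by rw [B.tsup_comm b d]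
      _ = B.tsup (B.tsup (B.tinf a d) d) b := (B.tsup_assoc _ _ _).symm
      _ = B.tsup (B.tsup d (B.tinf d a)) b := by
          rw [B.tsup_comm (B.tinf a d) d, B.tinf_comm a d]
      _ = B.tsup d b := by rw [B.tsup_absorb]
      _ = B.tsup b d := B.tsup_comm _ _
  have hu1 : B.tinf a c = B.kinf (B.tinf a c) (B.tinf b c) := by
    calc B.tinf a c = B.tinf (B.kinf a b) c := by rw [hab]
      _ = B.tinf c (B.kinf a b) := B.tinf_comm _ _
      _ = B.kinf (B.tinf c a) (B.tinf c b) := B.tinf_kinf _ _ _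
      _ = B.kinf (B.tinf a c) (B.tinf b c) := by
          rw [B.tinf_comm c a, B.tinf_comm c b]
  have hu2 : B.tinf a c = B.ksup (B.tinf a d) (B.tinf a c) := by
    calc B.tinf a c = B.tinf a (B.ksup d c) := by rw [hdc]
      _ = B.ksup (B.tinf a d) (B.tinf a c) := B.tinf_ksup _ _ _
  -- X ≤_k Y
  have hX1 : B.tsup (B.tinf a c) (B.tsup b d)
      = B.kinf (B.tsup (B.tinf a c) (B.tsup b d)) (B.tsup b d) := by
    calc B.tsup (B.tinf a c) (B.tsup b d)
        = B.tsup (B.kinf (B.tinf a c) (B.tinf b c)) (B.tsup b d) := by rw [← hu1]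
      _ = B.tsup (B.tsup b d) (B.kinf (B.tinf a c) (B.tinf b c)) := B.tsup_comm _ _
      _ = B.kinf (B.tsup (B.tsup b d) (B.tinf a c)) (B.tsup (B.tsup b d) (B.tinf b c)) :=
          B.tsup_kinf _ _ _
      _ = B.kinf (B.tsup (B.tinf a c) (B.tsup b d)) (B.tsup (B.tinf b c) (B.tsup b d)) := by
          rw [B.tsup_comm (B.tsup b d) (B.tinf a c), B.tsup_comm (B.tsup b d) (B.tinf b c)]
      _ = B.kinf (B.tsup (B.tinf a c) (B.tsup b d)) (B.tsup b d) := by rw [s1]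
  -- Y ≤_k X
  have hX2 : B.tsup (B.tinf a c) (B.tsup b d)
      = B.ksup (B.tsup b d) (B.tsup (B.tinf a c) (B.tsup b d)) := by
    calc B.tsup (B.tinf a c) (B.tsup b d)
        = B.tsup (B.ksup (B.tinf a d) (B.tinf a c)) (B.tsup b d) := by rw [← hu2]
      _ = B.tsup (B.tsup b d) (B.ksup (B.tinf a d) (B.tinf a c)) := B.tsup_comm _ _
      _ = B.ksup (B.tsup (B.tsup b d) (B.tinf a d)) (B.tsup (B.tsup b d) (B.tinf a c)) :=
          B.tsup_ksup _ _ _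
      _ = B.ksup (B.tsup (B.tinf a d) (B.tsup b d)) (B.tsup (B.tinf a c) (B.tsup b d)) := by
          rw [B.tsup_comm (B.tsup b d) (B.tinf a d), B.tsup_comm (B.tsup b d) (B.tinf a c)]
      _ = B.ksup (B.tsup b d) (B.tsup (B.tinf a c) (B.tsup b d)) := by rw [s2]
  -- combine by antisymmetry of ≤_k
  have hfin : B.ksup (B.tsup b d) (B.tsup (B.tinf a c) (B.tsup b d)) = B.tsup b d := by
    calc B.ksup (B.tsup b d) (B.tsup (B.tinf a c) (B.tsup b d))
        = B.ksup (B.tsup b d)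
            (B.kinf (B.tsup (B.tinf a c) (B.tsup b d)) (B.tsup b d)) := by rw [← hX1]
      _ = B.ksup (B.tsup b d)
            (B.kinf (B.tsup b d) (B.tsup (B.tinf a c) (B.tsup b d))) := by
          rw [B.kinf_comm]
      _ = B.tsup b d := B.ksup_absorb _ _
  rw [hX2, hfin]

end DPBU


/-- Every prime filter of the t-lattice of an unbounded distributive
pre-bilattice is either a prime filter or a prime ideal of the k-lattice. -/
theorem stmt_6 {A : Type*} (B : DPBU A) (F : Set A)
    (hF : IsPrimeFilter B.tle B.tsup B.tinf F) :
    IsPrimeFilter B.kle B.ksup B.kinf F ∨ IsPrimeIdeal B.kle B.ksup B.kinf F := by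
  obtain ⟨hne, hproper, hup, hinf, hprime⟩ := hF
  have hkinf_mem : ∀ a b, a ∈ F → b ∈ F → B.kinf a b ∈ F := fun a b ha hb =>
    hup _ _ (hinf a b ha hb) (B.tle_tinf_kinf a b)
  have hksup_mem : ∀ a b, a ∈ F → b ∈ F → B.ksup a b ∈ F := fun a b ha hb =>
    hup _ _ (hinf a b ha hb) (B.tle_tinf_ksup a b)
  have hksup_prime : ∀ a b, B.ksup a b ∈ F → a ∈ F ∨ b ∈ F := fun a b h =>
    hprime a b (hup _ _ h (B.tle_ksup_tsup a b))
  have hkinf_prime : ∀ a b, B.kinf a b ∈ F → a ∈ F ∨ b ∈ F := fun a b h =>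
    hprime a b (hup _ _ h (B.tle_kinf_tsup a b))
  by_cases hP : ∀ a b, a ∈ F → B.kle a b → b ∈ F
  · exact Or.inl ⟨hne, hproper, hP, hkinf_mem, hksup_prime⟩
  · push_neg at hP
    obtain ⟨a, b, ha, hab, hb⟩ := hP
    have hab' : B.kinf a b = a := by
      calc B.kinf a b = B.kinf a (B.ksup a b) := by rw [hab]
        _ = a := B.kinf_absorb _ _
    refine Or.inr ⟨hne, hproper, ?_, hksup_mem, hkinf_prime⟩
    intro c d hc hdc
    by_contra hd
    have hu : B.tinf a c ∈ F := hinf a c ha hc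
    have hkey : B.tle (B.tinf a c) (B.tsup b d) := B.key hab' hdc
    have hY : B.tsup b d ∈ F := hup _ _ hu hkey
    rcases hprime b d hY with h | h
    · exact hb h
    · exact hd h
end

section
/- Up to isomorphism, the only four-element unbounded distributive bilattice is FOUR, the bilattice on {00, 01, 10, 11} in which the t-order is the lattice with bottom 00, top 11 and incomparable middle elements 01, 10, the k-order is the lattice with bottom 01, top 10 and incomparable middle elements 00, 11, and ¬ swaps 00 and 11 while fixing 01 and 10. -/
/-- An unbounded distributive bilattice: an unbounded distributive
pre-bilattice with an involutory negation which is a dual endomorphism of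
the t-lattice and an endomorphism of the k-lattice. -/
structure DBU (A : Type*) extends DPBU A where
  neg : A → A
  neg_neg : ∀ a, neg (neg a) = a
  neg_tsup : ∀ a b, neg (tsup a b) = tinf (neg a) (neg b)
  neg_tinf : ∀ a b, neg (tinf a b) = tsup (neg a) (neg b)
  neg_ksup : ∀ a b, neg (ksup a b) = ksup (neg a) (neg b)
  neg_kinf : ∀ a b, neg (kinf a b) = kinf (neg a) (neg b)

/-- The four-element unbounded distributive bilattice `4u` (FOUR without the
nullary constants), on `Bool × Bool` with `00 = (false,false)` etc. -/
def fourDBU : DBU (Bool × Bool) where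
  tsup p q := (p.1 || q.1, p.2 || q.2)
  tinf p q := (p.1 && q.1, p.2 && q.2)
  ksup p q := (p.1 || q.1, p.2 && q.2)
  kinf p q := (p.1 && q.1, p.2 || q.2)
  neg p := (!p.2, !p.1)
  tsup_comm := by decide
  tinf_comm := by decide
  tsup_assoc := by decide
  tinf_assoc := by decide
  tsup_absorb := by decide
  tinf_absorb := by decide
  ksup_comm := by decide
  kinf_comm := by decide
  ksup_assoc := by decide
  kinf_assoc := by decide
  ksup_absorb := by decide
  kinf_absorb := by decide
  tsup_tinf := by decide
  tsup_ksup := by decide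
  tsup_kinf := by decide
  tinf_tsup := by decide
  tinf_ksup := by decide
  tinf_kinf := by decide
  ksup_tsup := by decide
  ksup_tinf := by decide
  ksup_kinf := by decide
  kinf_tsup := by decide
  kinf_tinf := by decide
  kinf_ksup := by decide
  neg_neg := by decide
  neg_tsup := by decide
  neg_tinf := by decide
  neg_ksup := by decide
  neg_kinf := by decide

/-- Idempotency from the absorption laws. -/
lemma aux_idem {A : Type*} (sup inf : A → A → A)
    (h1 : ∀ a b, sup a (inf a b) = a) (h2 : ∀ a b, inf a (sup a b) = a) (a : A) :
    sup a a = a := by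
  have h := h1 a (sup a a)
  rwa [h2 a a] at h

/-- Folding a commutative, associative, idempotent operation over a list
gives an upper bound of the list members. -/
lemma aux_foldr {A : Type*} (op : A → A → A)
    (hc : ∀ a b, op a b = op b a)
    (ha : ∀ a b c, op (op a b) c = op a (op b c))
    (hi : ∀ a, op a a = a) :
    ∀ (l : List A) (b : A), ∀ x ∈ l, op x (l.foldr op b) = l.foldr op b := by
  intro l
  induction l with
  | nil => simp
  | cons hd tl ih =>
    intro b x hx
    simp only [List.foldr_cons]
    rcases List.mem_cons.1 hx with h | h
    · subst h; rw [← ha, hi]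
    · rw [← ha, hc x hd, ha, ih b x h]

/-- Map from `Bool × Bool` to a quadruple of elements. -/
def quad {A : Type*} (bf kb kt bt : A) : Bool × Bool → A
  | (false, false) => bf
  | (false, true) => kb
  | (true, false) => kt
  | (true, true) => bt

/-- Up to isomorphism, FOUR is the only four-element unbounded distributive
bilattice. -/
theorem stmt_11 {A : Type*} (B : DBU A) (hcard : Nat.card A = 4) :
    ∃ f : A ≃ Bool × Bool,
      (∀ a b, f (B.tsup a b) = fourDBU.tsup (f a) (f b)) ∧
      (∀ a b, f (B.tinf a b) = fourDBU.tinf (f a) (f b)) ∧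
      (∀ a b, f (B.ksup a b) = fourDBU.ksup (f a) (f b)) ∧
      (∀ a b, f (B.kinf a b) = fourDBU.kinf (f a) (f b)) ∧
      (∀ a, f (B.neg a) = fourDBU.neg (f a)) := by
  have hfinite : Finite A := Nat.finite_of_card_ne_zero (by omega)
  have _inst : Fintype A := Fintype.ofFinite A
  have hfc : Fintype.card A = 4 := by rw [← Nat.card_eq_fintype_card]; exact hcard
  have hne : Nonempty A := Fintype.card_pos_iff.mp (by omega)
  obtain ⟨a0⟩ := hne
  -- idempotency
  have tsup_idem : ∀ a, B.tsup a a = a := aux_idem B.tsup B.tinf B.tsup_absorb B.tinf_absorb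
  have tinf_idem : ∀ a, B.tinf a a = a := aux_idem B.tinf B.tsup B.tinf_absorb B.tsup_absorb
  have ksup_idem : ∀ a, B.ksup a a = a := aux_idem B.ksup B.kinf B.ksup_absorb B.kinf_absorb
  have kinf_idem : ∀ a, B.kinf a a = a := aux_idem B.kinf B.ksup B.kinf_absorb B.ksup_absorb
  -- the four bounds
  have hmem : ∀ x : A, x ∈ (Finset.univ : Finset A).toList := fun x => by simp
  obtain ⟨bt, h_tsup_bt⟩ : ∃ t, ∀ x, B.tsup x t = t :=
    ⟨_, fun x => aux_foldr B.tsup B.tsup_comm B.tsup_assoc tsup_idem _ a0 x (hmem x)⟩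
  obtain ⟨bf, h_tinf_bf'⟩ : ∃ t, ∀ x, B.tinf x t = t :=
    ⟨_, fun x => aux_foldr B.tinf B.tinf_comm B.tinf_assoc tinf_idem _ a0 x (hmem x)⟩
  obtain ⟨kt, h_ksup_kt⟩ : ∃ t, ∀ x, B.ksup x t = t :=
    ⟨_, fun x => aux_foldr B.ksup B.ksup_comm B.ksup_assoc ksup_idem _ a0 x (hmem x)⟩
  obtain ⟨kb, h_kinf_kb'⟩ : ∃ t, ∀ x, B.kinf x t = t :=
    ⟨_, fun x => aux_foldr B.kinf B.kinf_comm B.kinf_assoc kinf_idem _ a0 x (hmem x)⟩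
  -- derived bound facts (all eight orientations)
  have h_tsup_bt' : ∀ x, B.tsup bt x = bt := fun x => by rw [B.tsup_comm]; exact h_tsup_bt x
  have h_tinf_bt' : ∀ x, B.tinf x bt = x := fun x => by
    have h := B.tinf_absorb x bt; rwa [h_tsup_bt x] at h
  have h_tinf_bt : ∀ x, B.tinf bt x = x := fun x => by rw [B.tinf_comm]; exact h_tinf_bt' x
  have h_tinf_bf : ∀ x, B.tinf bf x = bf := fun x => by rw [B.tinf_comm]; exact h_tinf_bf' x
  have h_tsup_bf' : ∀ x, B.tsup x bf = x := fun x => by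
    have h := B.tsup_absorb x bf; rwa [h_tinf_bf' x] at h
  have h_tsup_bf : ∀ x, B.tsup bf x = x := fun x => by rw [B.tsup_comm]; exact h_tsup_bf' x
  have h_ksup_kt' : ∀ x, B.ksup kt x = kt := fun x => by rw [B.ksup_comm]; exact h_ksup_kt x
  have h_kinf_kt' : ∀ x, B.kinf x kt = x := fun x => by
    have h := B.kinf_absorb x kt; rwa [h_ksup_kt x] at h
  have h_kinf_kt : ∀ x, B.kinf kt x = x := fun x => by rw [B.kinf_comm]; exact h_kinf_kt' x
  have h_kinf_kb : ∀ x, B.kinf kb x = kb := fun x => by rw [B.kinf_comm]; exact h_kinf_kb' x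
  have h_ksup_kb' : ∀ x, B.ksup x kb = x := fun x => by
    have h := B.ksup_absorb x kb; rwa [h_kinf_kb' x] at h
  have h_ksup_kb : ∀ x, B.ksup kb x = x := fun x => by rw [B.ksup_comm]; exact h_ksup_kb' x
  -- Identity I1 : kb ∨ₜ kt = bt
  have I1 : B.tsup kb kt = bt := by
    have h1 : B.ksup (B.tsup kb kt) bt = bt := by
      rw [B.ksup_comm, B.ksup_tsup, h_ksup_kb' bt, h_ksup_kt bt, B.tsup_comm, h_tsup_bt kt]
    have h2 : B.kinf (B.tsup kb kt) bt = B.tsup kb kt := by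
      have h := B.kinf_absorb (B.tsup kb kt) bt; rwa [h1] at h
    have h3 : B.kinf bt (B.tsup kb kt) = bt := by
      rw [B.kinf_tsup, h_kinf_kb' bt, h_kinf_kt' bt, h_tsup_bt kb]
    rw [← h2, B.kinf_comm, h3]
  -- Identity I2 : kb ∧ₜ kt = bf
  have I2 : B.tinf kb kt = bf := by
    have h1 : B.ksup (B.tinf kb kt) bf = bf := by
      rw [B.ksup_comm, B.ksup_tinf, h_ksup_kb' bf, h_ksup_kt bf, h_tinf_bf kt]
    have h2 : B.kinf (B.tinf kb kt) bf = B.tinf kb kt := by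
      have h := B.kinf_absorb (B.tinf kb kt) bf; rwa [h1] at h
    have h3 : B.kinf bf (B.tinf kb kt) = bf := by
      rw [B.kinf_tinf, h_kinf_kb' bf, h_kinf_kt' bf, B.tinf_comm, h_tinf_bf kb]
    rw [← h2, B.kinf_comm, h3]
  -- Identity I3 : bf ∨ₖ bt = kt
  have I3 : B.ksup bf bt = kt := by
    have h1 : B.tsup (B.ksup bf bt) kt = kt := by
      rw [B.tsup_comm, B.tsup_ksup, h_tsup_bf' kt, h_tsup_bt kt, B.ksup_comm, h_ksup_kt bt]
    have h2 : B.tinf (B.ksup bf bt) kt = B.ksup bf bt := by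
      have h := B.tinf_absorb (B.ksup bf bt) kt; rwa [h1] at h
    have h3 : B.tinf kt (B.ksup bf bt) = kt := by
      rw [B.tinf_ksup, h_tinf_bf' kt, h_tinf_bt' kt, h_ksup_kt bf]
    rw [← h2, B.tinf_comm, h3]
  -- Identity I4 : bf ∧ₖ bt = kb
  have I4 : B.kinf bf bt = kb := by
    have h1 : B.tsup (B.kinf bf bt) kb = kb := by
      rw [B.tsup_comm, B.tsup_kinf, h_tsup_bf' kb, h_tsup_bt kb, h_kinf_kb bt]
    have h2 : B.tinf (B.kinf bf bt) kb = B.kinf bf bt := by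
      have h := B.tinf_absorb (B.kinf bf bt) kb; rwa [h1] at h
    have h3 : B.tinf kb (B.kinf bf bt) = kb := by
      rw [B.tinf_kinf, h_tinf_bf' kb, h_tinf_bt' kb, B.kinf_comm, h_kinf_kb bf]
    rw [← h2, B.tinf_comm, h3]
  -- negation on the bounds
  have hneg_bt : B.neg bt = bf := by
    have h : ∀ y : A, B.tsup (B.neg bt) y = y := by
      intro y
      have h1 := congrArg B.neg (h_tsup_bt (B.neg y))
      rw [B.neg_tsup, B.neg_neg] at h1
      have h2 := B.tsup_absorb y (B.neg bt)
      rw [h1] at h2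
      rw [B.tsup_comm]; exact h2
    have h1 := h bf
    have h2 := h_tsup_bf' (B.neg bt)
    rw [h1] at h2; exact h2.symm
  have hneg_bf : B.neg bf = bt := by rw [← hneg_bt, B.neg_neg]
  have hneg_kb : B.neg kb = kb := by
    have h : ∀ y : A, B.ksup (B.neg kb) y = y := by
      intro y
      have h1 := congrArg B.neg (h_ksup_kb' (B.neg y))
      rw [B.neg_ksup, B.neg_neg] at h1
      rw [B.ksup_comm]; exact h1
    have h1 := h kb
    have h2 := h_ksup_kb (B.neg kb)
    rw [B.ksup_comm, h1] at h2; exact h2.symm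
  have hneg_kt : B.neg kt = kt := by
    have h : ∀ y : A, B.ksup y (B.neg kt) = B.neg kt := by
      intro y
      have h1 := congrArg B.neg (h_ksup_kt (B.neg y))
      rw [B.neg_ksup, B.neg_neg] at h1
      exact h1
    have h1 := h kt
    have h2 := h_ksup_kt (B.neg kt)
    rw [B.ksup_comm, h1] at h2; exact h2
  -- distinctness
  obtain ⟨x0, y0, hxy⟩ : ∃ a b : A, a ≠ b := Fintype.exists_pair_of_one_lt_card (by omega)
  have ne_ft : bf ≠ bt := by
    intro h
    apply hxy
    have hx : ∀ x : A, x = bt := fun x => by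
      rw [← h_tsup_bf x, h, h_tsup_bt' x]
    rw [hx x0, hx y0]
  have ne_bk : kb ≠ kt := by
    intro h
    apply hxy
    have hx : ∀ x : A, x = kt := fun x => by
      rw [← h_ksup_kb x, h, h_ksup_kt' x]
    rw [hx x0, hx y0]
  have ne_f_kb : bf ≠ kb := fun h => ne_ft (by rw [h, ← hneg_kb, ← h, hneg_bf])
  have ne_f_kt : bf ≠ kt := fun h => ne_ft (by rw [h, ← hneg_kt, ← h, hneg_bf])
  have ne_t_kb : bt ≠ kb := fun h => ne_ft (by rw [← hneg_bt, h, hneg_kb])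
  have ne_t_kt : bt ≠ kt := fun h => ne_ft (by rw [← hneg_bt, h, hneg_kt])
  -- the bijection
  have hinj : Function.Injective (quad bf kb kt bt) := by
    rintro ⟨p1, p2⟩ ⟨q1, q2⟩ h
    cases p1 <;> cases p2 <;> cases q1 <;> cases q2 <;>
      first
        | rfl
        | exact absurd h ne_ft
        | exact absurd h ne_ft.symm
        | exact absurd h ne_bk
        | exact absurd h ne_bk.symm
        | exact absurd h ne_f_kb
        | exact absurd h ne_f_kb.symm
        | exact absurd h ne_f_kt
        | exact absurd h ne_f_kt.symm
        | exact absurd h ne_t_kb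
        | exact absurd h ne_t_kb.symm
        | exact absurd h ne_t_kt
        | exact absurd h ne_t_kt.symm
  have hbij : Function.Bijective (quad bf kb kt bt) :=
    (Fintype.bijective_iff_injective_and_card _).2 ⟨hinj, by rw [hfc]; decide⟩
  let eqv := Equiv.ofBijective _ hbij
  have key : ∀ a : A, quad bf kb kt bt (eqv.symm a) = a := fun a => eqv.apply_symm_apply a
  have sym : ∀ p, eqv.symm (quad bf kb kt bt p) = p := fun p => eqv.symm_apply_apply p
  -- the operation tables
  have table_tsup : ∀ p q, B.tsup (quad bf kb kt bt p) (quad bf kb kt bt q)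
      = quad bf kb kt bt (fourDBU.tsup p q) := by
    rintro ⟨p1, p2⟩ ⟨q1, q2⟩
    cases p1 <;> cases p2 <;> cases q1 <;> cases q2
    · exact tsup_idem bf
    · exact h_tsup_bf kb
    · exact h_tsup_bf kt
    · exact h_tsup_bf bt
    · exact h_tsup_bf' kb
    · exact tsup_idem kb
    · exact I1
    · exact h_tsup_bt kb
    · exact h_tsup_bf' kt
    · rw [B.tsup_comm]; exact I1
    · exact tsup_idem kt
    · exact h_tsup_bt kt
    · exact h_tsup_bf' bt
    · exact h_tsup_bt' kb
    · exact h_tsup_bt' kt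
    · exact tsup_idem bt
  have table_tinf : ∀ p q, B.tinf (quad bf kb kt bt p) (quad bf kb kt bt q)
      = quad bf kb kt bt (fourDBU.tinf p q) := by
    rintro ⟨p1, p2⟩ ⟨q1, q2⟩
    cases p1 <;> cases p2 <;> cases q1 <;> cases q2
    · exact tinf_idem bf
    · exact h_tinf_bf kb
    · exact h_tinf_bf kt
    · exact h_tinf_bf bt
    · exact h_tinf_bf' kb
    · exact tinf_idem kb
    · exact I2
    · exact h_tinf_bt' kb
    · exact h_tinf_bf' kt
    · rw [B.tinf_comm]; exact I2
    · exact tinf_idem kt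
    · exact h_tinf_bt' kt
    · exact h_tinf_bf' bt
    · exact h_tinf_bt kb
    · exact h_tinf_bt kt
    · exact tinf_idem bt
  have table_ksup : ∀ p q, B.ksup (quad bf kb kt bt p) (quad bf kb kt bt q)
      = quad bf kb kt bt (fourDBU.ksup p q) := by
    rintro ⟨p1, p2⟩ ⟨q1, q2⟩
    cases p1 <;> cases p2 <;> cases q1 <;> cases q2
    · exact ksup_idem bf
    · exact h_ksup_kb' bf
    · exact h_ksup_kt bf
    · exact I3
    · exact h_ksup_kb bf
    · exact ksup_idem kb
    · exact h_ksup_kt kb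
    · exact h_ksup_kb bt
    · exact h_ksup_kt' bf
    · exact h_ksup_kt' kb
    · exact ksup_idem kt
    · exact h_ksup_kt' bt
    · rw [B.ksup_comm]; exact I3
    · exact h_ksup_kb' bt
    · exact h_ksup_kt bt
    · exact ksup_idem bt
  have table_kinf : ∀ p q, B.kinf (quad bf kb kt bt p) (quad bf kb kt bt q)
      = quad bf kb kt bt (fourDBU.kinf p q) := by
    rintro ⟨p1, p2⟩ ⟨q1, q2⟩
    cases p1 <;> cases p2 <;> cases q1 <;> cases q2
    · exact kinf_idem bf
    · exact h_kinf_kb' bf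
    · exact h_kinf_kt' bf
    · exact I4
    · exact h_kinf_kb bf
    · exact kinf_idem kb
    · exact h_kinf_kt' kb
    · exact h_kinf_kb bt
    · exact h_kinf_kt bf
    · exact h_kinf_kb' kt
    · exact kinf_idem kt
    · exact h_kinf_kt bt
    · rw [B.kinf_comm]; exact I4
    · exact h_kinf_kb' bt
    · exact h_kinf_kt' bt
    · exact kinf_idem bt
  have table_neg : ∀ p, B.neg (quad bf kb kt bt p) = quad bf kb kt bt (fourDBU.neg p) := by
    rintro ⟨p1, p2⟩
    cases p1 <;> cases p2
    · exact hneg_bf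
    · exact hneg_kb
    · exact hneg_kt
    · exact hneg_bt
  refine ⟨eqv.symm, ?_, ?_, ?_, ?_, ?_⟩
  · intro a b
    conv_lhs => rw [← key a, ← key b, table_tsup]
    exact sym _
  · intro a b
    conv_lhs => rw [← key a, ← key b, table_tinf]
    exact sym _
  · intro a b
    conv_lhs => rw [← key a, ← key b, table_ksup]
    exact sym _
  · intro a b
    conv_lhs => rw [← key a, ← key b, table_kinf]
    exact sym _
  · intro a
    conv_lhs => rw [← key a, table_neg]
    exact sym _
end

section
/- (Product representation) For every distributive bilattice A there is a bounded distributive lattice L such that A is isomorphic to L ⊙ L, where L ⊙ L is the bilattice on L × L with (a₁,a₂) ∨_t (b₁,b₂) = (a₁∨b₁, a₂∧b₂), (a₁,a₂) ∧_t (b₁,b₂) = (a₁∧b₁, a₂∨b₂), ¬(a,b) = (b,a), 0_t = (0,1), 1_t = (1,0), 0_k = (0,0), 1_k = (1,1). Moreover L may be taken to be the interval [0_k, 1_t] of the t-lattice of A. -/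
/-- A (bounded) distributive bilattice: bounded distributive t-lattice,
k-bounds `0_k`, `1_k`, k-operations given by the 90° Lemma formulas, and an
involutory negation which is a dual endomorphism of the bounded t-lattice
and an endomorphism of the bounded k-lattice. -/
structure DB (A : Type*) extends DPBU A where
  neg : A → A
  tbot : A
  ttop : A
  kbot : A
  ktop : A
  tbot_le : ∀ a, tsup tbot a = a
  le_ttop : ∀ a, tsup a ttop = ttop
  kbot_le : ∀ a, ksup kbot a = a
  le_ktop : ∀ a, ksup a ktop = ktop
  ksup_def : ∀ a b, ksup a b = tsup (tinf (tinf a b) kbot) (tinf (tsup a b) ktop)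
  kinf_def : ∀ a b, kinf a b = tsup (tinf (tinf a b) ktop) (tinf (tsup a b) kbot)
  neg_neg : ∀ a, neg (neg a) = a
  neg_tsup : ∀ a b, neg (tsup a b) = tinf (neg a) (neg b)
  neg_tinf : ∀ a b, neg (tinf a b) = tsup (neg a) (neg b)
  neg_ksup : ∀ a b, neg (ksup a b) = ksup (neg a) (neg b)
  neg_kinf : ∀ a b, neg (kinf a b) = kinf (neg a) (neg b)
  neg_tbot : neg tbot = ttop
  neg_ttop : neg ttop = tbot
  neg_kbot : neg kbot = kbot
  neg_ktop : neg ktop = ktop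

namespace DB

variable {A : Type*} (B : DB A)

theorem tsup_idem (a : A) : B.tsup a a = a := by
  calc B.tsup a a = B.tsup a (B.tinf a (B.tsup a a)) := by rw [B.tinf_absorb]
    _ = a := B.tsup_absorb _ _

theorem tinf_idem (a : A) : B.tinf a a = a := by
  calc B.tinf a a = B.tinf a (B.tsup a (B.tinf a a)) := by rw [B.tsup_absorb]
    _ = a := B.tinf_absorb _ _

theorem ksup_idem (a : A) : B.ksup a a = a := by
  calc B.ksup a a = B.ksup a (B.kinf a (B.ksup a a)) := by rw [B.kinf_absorb]
    _ = a := B.ksup_absorb _ _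

theorem tinf_tbot (a : A) : B.tinf B.tbot a = B.tbot := by
  calc B.tinf B.tbot a = B.tinf B.tbot (B.tsup B.tbot a) := by rw [B.tbot_le]
    _ = B.tbot := B.tinf_absorb _ _

theorem tinf_ttop' (a : A) : B.tinf a B.ttop = a := by
  calc B.tinf a B.ttop = B.tinf a (B.tsup a B.ttop) := by rw [B.le_ttop]
    _ = a := B.tinf_absorb _ _

theorem tinf_ttop (a : A) : B.tinf B.ttop a = a := by
  rw [B.tinf_comm]; exact B.tinf_ttop' a

theorem kinf_kbot (a : A) : B.kinf B.kbot a = B.kbot := by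
  calc B.kinf B.kbot a = B.kinf B.kbot (B.ksup B.kbot a) := by rw [B.kbot_le]
    _ = B.kbot := B.kinf_absorb _ _

theorem kinf_ktop (a : A) : B.kinf a B.ktop = a := by
  calc B.kinf a B.ktop = B.kinf a (B.ksup a B.ktop) := by rw [B.le_ktop]
    _ = a := B.kinf_absorb _ _

/-- `0_k ∨_t 1_k = 1_t`. -/
theorem tt : B.tsup B.kbot B.ktop = B.ttop := by
  have h := B.ksup_def B.ttop B.ttop
  rw [B.ksup_idem, B.tinf_idem, B.tsup_idem, B.tinf_ttop, B.tinf_ttop] at h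
  exact h.symm

/-- `0_k ∧_t 1_k = 0_t`. -/
theorem bb : B.tinf B.kbot B.ktop = B.tbot := by
  have h : B.neg (B.tinf B.kbot B.ktop) = B.ttop := by
    rw [B.neg_tinf, B.neg_kbot, B.neg_ktop, B.tt]
  calc B.tinf B.kbot B.ktop = B.neg (B.neg (B.tinf B.kbot B.ktop)) := (B.neg_neg _).symm
    _ = B.neg B.ttop := by rw [h]
    _ = B.tbot := B.neg_ttop

theorem ksup_tb : B.ksup B.ttop B.tbot = B.ktop := by
  have h := B.ksup_def B.ttop B.tbot
  rw [B.tinf_ttop, B.tinf_tbot, B.tsup_comm B.ttop B.tbot, B.tbot_le B.ttop,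
    B.tinf_ttop, B.tbot_le] at h
  exact h

theorem phi' (a : A) : B.kinf a B.ttop = B.tsup (B.tinf a B.ktop) B.kbot := by
  have h := B.kinf_def a B.ttop
  rw [B.tinf_ttop', B.le_ttop, B.tinf_ttop] at h
  exact h

theorem lemA (a : A) : B.tsup B.kbot (B.kinf a B.ttop) = B.kinf a B.ttop := by
  rw [B.phi']
  calc B.tsup B.kbot (B.tsup (B.tinf a B.ktop) B.kbot)
      = B.tsup B.kbot (B.tsup B.kbot (B.tinf a B.ktop)) := by
        rw [B.tsup_comm (B.tinf a B.ktop)]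
    _ = B.tsup (B.tsup B.kbot B.kbot) (B.tinf a B.ktop) := (B.tsup_assoc _ _ _).symm
    _ = B.tsup B.kbot (B.tinf a B.ktop) := by rw [B.tsup_idem]
    _ = B.tsup (B.tinf a B.ktop) B.kbot := B.tsup_comm _ _

theorem lemB {x : A} (h : B.tsup B.kbot x = x) : B.kinf x B.ttop = x := by
  calc B.kinf x B.ttop = B.tsup (B.tinf x B.ktop) B.kbot := B.phi' x
    _ = B.tsup B.kbot (B.tinf x B.ktop) := B.tsup_comm _ _
    _ = B.tinf (B.tsup B.kbot x) (B.tsup B.kbot B.ktop) := B.tsup_tinf _ _ _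
    _ = B.tinf x B.ttop := by rw [h, B.tt]
    _ = x := B.tinf_ttop' x

theorem lemC {y : A} (h : B.tsup B.kbot y = y) : B.kinf (B.neg y) B.ttop = B.kbot := by
  have h2 : B.tinf B.kbot (B.neg y) = B.neg y := by
    calc B.tinf B.kbot (B.neg y) = B.tinf (B.neg B.kbot) (B.neg y) := by rw [B.neg_kbot]
      _ = B.neg (B.tsup B.kbot y) := (B.neg_tsup _ _).symm
      _ = B.neg y := by rw [h]
  have h3 : B.tinf (B.neg y) B.ktop = B.tbot := by
    calc B.tinf (B.neg y) B.ktop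
        = B.tinf (B.tinf B.kbot (B.neg y)) B.ktop := by rw [h2]
      _ = B.tinf (B.tinf (B.neg y) B.kbot) B.ktop := by rw [B.tinf_comm B.kbot]
      _ = B.tinf (B.neg y) (B.tinf B.kbot B.ktop) := B.tinf_assoc _ _ _
      _ = B.tinf (B.neg y) B.tbot := by rw [B.bb]
      _ = B.tinf B.tbot (B.neg y) := B.tinf_comm _ _
      _ = B.tbot := B.tinf_tbot _
  calc B.kinf (B.neg y) B.ttop = B.tsup (B.tinf (B.neg y) B.ktop) B.kbot := B.phi' _
    _ = B.tsup B.tbot B.kbot := by rw [h3]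
    _ = B.kbot := B.tbot_le _

theorem retr (a : A) : B.ksup (B.kinf a B.ttop) (B.kinf a B.tbot) = a := by
  calc B.ksup (B.kinf a B.ttop) (B.kinf a B.tbot)
      = B.kinf a (B.ksup B.ttop B.tbot) := (B.kinf_ksup _ _ _).symm
    _ = B.kinf a B.ktop := by rw [B.ksup_tb]
    _ = a := B.kinf_ktop a

theorem key (a : A) :
    B.ksup (B.kinf a B.ttop) (B.neg (B.kinf (B.neg a) B.ttop)) = a := by
  rw [B.neg_kinf, B.neg_neg, B.neg_ttop]
  exact B.retr a

end DB

/-- The Product Representation Theorem for distributive bilattices: every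
distributive bilattice `A` is isomorphic to `L ⊙ L`, where `L` may be taken to
be the interval `[0_k, 1_t]` of the t-lattice of `A`.  We express the
isomorphism as an injection `f : A → A × A` whose range is `[0_k,1_t] × [0_k,1_t]`
and which transforms the operations of `A` into the `⊙` operations. -/
theorem stmt_17 {A : Type*} (B : DB A) :
    ∃ f : A → A × A,
      Function.Injective f ∧
      Set.range f = {p : A × A |
        (B.tle B.kbot p.1 ∧ B.tle p.1 B.ttop) ∧
        (B.tle B.kbot p.2 ∧ B.tle p.2 B.ttop)} ∧
      (∀ a b, f (B.tsup a b) = (B.tsup (f a).1 (f b).1, B.tinf (f a).2 (f b).2)) ∧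
      (∀ a b, f (B.tinf a b) = (B.tinf (f a).1 (f b).1, B.tsup (f a).2 (f b).2)) ∧
      (∀ a, f (B.neg a) = ((f a).2, (f a).1)) ∧
      f B.tbot = (B.kbot, B.ttop) ∧
      f B.ttop = (B.ttop, B.kbot) ∧
      f B.kbot = (B.kbot, B.kbot) ∧
      f B.ktop = (B.ttop, B.ttop) := by
  refine ⟨fun a => (B.kinf a B.ttop, B.kinf (B.neg a) B.ttop), ?_, ?_, ?_, ?_, ?_, ?_, ?_, ?_, ?_⟩
  · -- injectivity
    intro a b h
    have h1 : B.kinf a B.ttop = B.kinf b B.ttop := congrArg Prod.fst h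
    have h2 : B.kinf (B.neg a) B.ttop = B.kinf (B.neg b) B.ttop := congrArg Prod.snd h
    calc a = B.ksup (B.kinf a B.ttop) (B.neg (B.kinf (B.neg a) B.ttop)) := (B.key a).symm
      _ = B.ksup (B.kinf b B.ttop) (B.neg (B.kinf (B.neg b) B.ttop)) := by rw [h1, h2]
      _ = b := B.key b
  · -- range
    ext p
    constructor
    · rintro ⟨a, rfl⟩
      exact ⟨⟨B.lemA a, B.le_ttop _⟩, ⟨B.lemA (B.neg a), B.le_ttop _⟩⟩
    · rintro ⟨⟨h1, _⟩, ⟨h3, _⟩⟩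
      refine ⟨B.ksup p.1 (B.neg p.2), ?_⟩
      have e1 : B.kinf (B.ksup p.1 (B.neg p.2)) B.ttop = p.1 := by
        calc B.kinf (B.ksup p.1 (B.neg p.2)) B.ttop
            = B.kinf B.ttop (B.ksup p.1 (B.neg p.2)) := B.kinf_comm _ _
          _ = B.ksup (B.kinf B.ttop p.1) (B.kinf B.ttop (B.neg p.2)) := B.kinf_ksup _ _ _
          _ = B.ksup (B.kinf p.1 B.ttop) (B.kinf (B.neg p.2) B.ttop) := by
              rw [B.kinf_comm B.ttop p.1, B.kinf_comm B.ttop]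
          _ = B.ksup p.1 B.kbot := by rw [B.lemB h1, B.lemC h3]
          _ = B.ksup B.kbot p.1 := B.ksup_comm _ _
          _ = p.1 := B.kbot_le _
      have e2 : B.kinf (B.neg (B.ksup p.1 (B.neg p.2))) B.ttop = p.2 := by
        rw [B.neg_ksup, B.neg_neg]
        calc B.kinf (B.ksup (B.neg p.1) p.2) B.ttop
            = B.kinf B.ttop (B.ksup (B.neg p.1) p.2) := B.kinf_comm _ _
          _ = B.ksup (B.kinf B.ttop (B.neg p.1)) (B.kinf B.ttop p.2) := B.kinf_ksup _ _ _
          _ = B.ksup (B.kinf (B.neg p.1) B.ttop) (B.kinf p.2 B.ttop) := by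
              rw [B.kinf_comm B.ttop, B.kinf_comm B.ttop]
          _ = B.ksup B.kbot p.2 := by rw [B.lemC h1, B.lemB h3]
          _ = p.2 := B.kbot_le _
      exact Prod.ext e1 e2
  · -- tsup
    intro a b
    refine Prod.ext ?_ ?_
    · calc B.kinf (B.tsup a b) B.ttop
          = B.kinf B.ttop (B.tsup a b) := B.kinf_comm _ _
        _ = B.tsup (B.kinf B.ttop a) (B.kinf B.ttop b) := B.kinf_tsup _ _ _
        _ = B.tsup (B.kinf a B.ttop) (B.kinf b B.ttop) := by
            rw [B.kinf_comm B.ttop a, B.kinf_comm B.ttop b]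
    · show B.kinf (B.neg (B.tsup a b)) B.ttop = _
      rw [B.neg_tsup]
      calc B.kinf (B.tinf (B.neg a) (B.neg b)) B.ttop
          = B.kinf B.ttop (B.tinf (B.neg a) (B.neg b)) := B.kinf_comm _ _
        _ = B.tinf (B.kinf B.ttop (B.neg a)) (B.kinf B.ttop (B.neg b)) := B.kinf_tinf _ _ _
        _ = B.tinf (B.kinf (B.neg a) B.ttop) (B.kinf (B.neg b) B.ttop) := by
            rw [B.kinf_comm B.ttop, B.kinf_comm B.ttop]
  · -- tinf
    intro a b
    refine Prod.ext ?_ ?_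
    · calc B.kinf (B.tinf a b) B.ttop
          = B.kinf B.ttop (B.tinf a b) := B.kinf_comm _ _
        _ = B.tinf (B.kinf B.ttop a) (B.kinf B.ttop b) := B.kinf_tinf _ _ _
        _ = B.tinf (B.kinf a B.ttop) (B.kinf b B.ttop) := by
            rw [B.kinf_comm B.ttop a, B.kinf_comm B.ttop b]
    · show B.kinf (B.neg (B.tinf a b)) B.ttop = _
      rw [B.neg_tinf]
      calc B.kinf (B.tsup (B.neg a) (B.neg b)) B.ttop
          = B.kinf B.ttop (B.tsup (B.neg a) (B.neg b)) := B.kinf_comm _ _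
        _ = B.tsup (B.kinf B.ttop (B.neg a)) (B.kinf B.ttop (B.neg b)) := B.kinf_tsup _ _ _
        _ = B.tsup (B.kinf (B.neg a) B.ttop) (B.kinf (B.neg b) B.ttop) := by
            rw [B.kinf_comm B.ttop, B.kinf_comm B.ttop]
  · -- neg
    intro a
    refine Prod.ext rfl ?_
    show B.kinf (B.neg (B.neg a)) B.ttop = B.kinf a B.ttop
    rw [B.neg_neg]
  · -- tbot
    refine Prod.ext ?_ ?_
    · show B.kinf B.tbot B.ttop = B.kbot
      rw [B.phi', B.tinf_tbot, B.tbot_le]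
    · show B.kinf (B.neg B.tbot) B.ttop = B.ttop
      rw [B.neg_tbot, B.phi', B.tinf_ttop, B.tsup_comm, B.tt]
  · -- ttop
    refine Prod.ext ?_ ?_
    · show B.kinf B.ttop B.ttop = B.ttop
      rw [B.phi', B.tinf_ttop, B.tsup_comm, B.tt]
    · show B.kinf (B.neg B.ttop) B.ttop = B.kbot
      rw [B.neg_ttop, B.phi', B.tinf_tbot, B.tbot_le]
  · -- kbot
    refine Prod.ext ?_ ?_
    · exact B.kinf_kbot _
    · show B.kinf (B.neg B.kbot) B.ttop = B.kbot
      rw [B.neg_kbot]; exact B.kinf_kbot _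
  · -- ktop
    have h : B.kinf B.ktop B.ttop = B.ttop := by
      rw [B.phi']
      calc B.tsup (B.tinf B.ktop B.ktop) B.kbot
          = B.tsup B.ktop B.kbot := by rw [B.tinf_idem]
        _ = B.tsup B.kbot B.ktop := B.tsup_comm _ _
        _ = B.ttop := B.tt
    refine Prod.ext h ?_
    show B.kinf (B.neg B.ktop) B.ttop = B.ttop
    rw [B.neg_ktop]; exact h
end
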